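/- (Representation Lemma) Let Φ be a set of pairs (m,n) with n > m > 1 and let φ be a modal formula. If φ is satisfiable in a model whose frame is a Φ-frame, then φ is satisfied at the root r of a model (W,R,V) rooted at r which satisfies condition (1): ∀x,y (x R y → ∃y' (x R y' ∧ d_r(y') = d_r(x)+1 ∧ y' ∼ y)), and condition (2): for each (m,n) ∈ Φ, ∀x,z (x R^m z → ∃ w_1,…,w_{n−1} with x R w_1 R ⋯ R w_{n−1} R z and d_r(w_j) = d_r(x)+j for each j). -/

import Mathlib

/-- Modal formulas: ⊥, propositional variables, ¬, ∨, ◇. -/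
inductive ModalFormula : Type
  | bot : ModalFormula
  | var : ℕ → ModalFormula
  | neg : ModalFormula → ModalFormula
  | or : ModalFormula → ModalFormula → ModalFormula
  | dia : ModalFormula → ModalFormula

namespace ModalFormula

/-- Modal depth: maximal nesting of ◇. -/
def md : ModalFormula → ℕ
  | bot => 0
  | var _ => 0
  | neg φ => md φ
  | or φ ψ => max (md φ) (md ψ)
  | dia φ => md φ + 1

/-- The set of propositional variables occurring in a formula. -/
def vars : ModalFormula → Set ℕ
  | bot => ∅
  | var p => {p}
  | neg φ => vars φ
  | or φ ψ => vars φ ∪ vars ψ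
  | dia φ => vars φ

/-- The set of subformulas of a formula (including the formula itself). -/
def subformulas : ModalFormula → Set ModalFormula
  | bot => {bot}
  | var p => {var p}
  | neg φ => insert (neg φ) (subformulas φ)
  | or φ ψ => insert (or φ ψ) (subformulas φ ∪ subformulas ψ)
  | dia φ => insert (dia φ) (subformulas φ)

end ModalFormula

/-- Standard Kripke satisfaction for a model given by a relation `R` and a valuation `V`. -/
def Sat {W : Type*} (R : W → W → Prop) (V : ℕ → Set W) : W → ModalFormula → Prop
  | _, .bot => False
  | w, .var p => w ∈ V p
  | w, .neg φ => ¬ Sat R V w φ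
  | w, .or φ ψ => Sat R V w φ ∨ Sat R V w ψ
  | w, .dia φ => ∃ v, R w v ∧ Sat R V v φ

/-- The `k`-step relation: `relPow R 0` is the identity, `relPow R (k+1) = relPow R k ∘ R`. -/
def relPow {W : Type*} (R : W → W → Prop) : ℕ → W → W → Prop
  | 0, x, y => x = y
  | k + 1, x, y => ∃ u, relPow R k x u ∧ R u y

/-- A frame is a `Φ`-frame if for every `(m,n) ∈ Φ`, `x R^m y` implies `x R^n y`. -/
def PhiFrame {W : Type*} (R : W → W → Prop) (Φ : Set (ℕ × ℕ)) : Prop :=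
  ∀ mn ∈ Φ, ∀ x y : W, relPow R mn.1 x y → relPow R mn.2 x y

/-- A pointed frame is rooted at `r` if every world is reachable from `r` in some number of steps. -/
def Rooted {W : Type*} (R : W → W → Prop) (r : W) : Prop :=
  ∀ w : W, ∃ k, relPow R k r w

/-- The depth of `w` w.r.t. `r`: the least `k` with `r R^k w`. -/
noncomputable def depth {W : Type*} (R : W → W → Prop) (r w : W) : ℕ :=
  sInf {k | relPow R k r w}

/-- `f` is a pointed p-morphism from `(W',R',r')` to `(W,R,r)`. -/
def IsPMorphism {W' W : Type*} (R' : W' → W' → Prop) (r' : W')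
    (R : W → W → Prop) (r : W) (f : W' → W) : Prop :=
  f r' = r ∧ (∀ x y, R' x y → R (f x) (f y)) ∧
    (∀ x y', R (f x) y' → ∃ y, R' x y ∧ f y = y')

/-- Bisimilarity of `x` (in model `(R,V)`) and `x'` (in model `(R',V')`). -/
def Bisim {W W' : Type*} (R : W → W → Prop) (V : ℕ → Set W)
    (R' : W' → W' → Prop) (V' : ℕ → Set W') (x : W) (x' : W') : Prop :=
  ∃ Z : W → W' → Prop, Z x x' ∧ ∀ w w', Z w w' →
    (∀ p, w ∈ V p ↔ w' ∈ V' p) ∧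
    (∀ v, R w v → ∃ v', R' w' v' ∧ Z v v') ∧
    (∀ v', R' w' v' → ∃ v, R w v ∧ Z v v')

/-- `k`-bisimilarity w.r.t. the set `X` of propositional variables. -/
def kBisim {W W' : Type*} (R : W → W → Prop) (V : ℕ → Set W)
    (R' : W' → W' → Prop) (V' : ℕ → Set W') (X : Set ℕ) :
    ℕ → W → W' → Prop
  | 0, w, w' => ∀ p ∈ X, (w ∈ V p ↔ w' ∈ V' p)
  | k + 1, w, w' => (∀ p ∈ X, (w ∈ V p ↔ w' ∈ V' p)) ∧
      (∀ v, R w v → ∃ v', R' w' v' ∧ kBisim R V R' V' X k v v') ∧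
      (∀ v', R' w' v' → ∃ v, R w v ∧ kBisim R V R' V' X k v v')

/-- `DepthPath R dep n x z` says there is an `n`-step `R`-path
`x R w₁ R ⋯ R w_{n-1} R z` whose intermediate points satisfy `dep (w_j) = dep x + j`. -/
def DepthPath {W : Type*} (R : W → W → Prop) (dep : W → ℕ) (n : ℕ) (x z : W) : Prop :=
  ∃ w : ℕ → W, w 0 = x ∧ w n = z ∧ (∀ j < n, R (w j) (w (j + 1))) ∧
    ∀ j, 0 < j → j < n → dep (w j) = dep x + j

namespace RepAux
attribute [local instance] Classical.propDecidable


def enc : ModalFormula → ℕ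
  | .bot => Nat.pair 0 0
  | .var p => Nat.pair 1 p
  | .neg φ => Nat.pair 2 (enc φ)
  | .or φ ψ => Nat.pair 3 (Nat.pair (enc φ) (enc ψ))
  | .dia φ => Nat.pair 4 (enc φ)

theorem enc_inj : Function.Injective enc := by
  intro a
  induction a with
  | bot => intro b; cases b <;> simp [enc, Nat.pair_eq_pair]
  | var p => intro b; cases b <;> simp [enc, Nat.pair_eq_pair] <;> intro h <;> simp [h]
  | neg φ ih => intro b; cases b <;> simp [enc, Nat.pair_eq_pair] <;> intro h <;> simp [ih h]
  | or φ ψ ih1 ih2 =>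
      intro b; cases b <;> simp [enc, Nat.pair_eq_pair]
      intro h1 h2; exact ⟨ih1 h1, ih2 h2⟩
  | dia φ ih => intro b; cases b <;> simp [enc, Nat.pair_eq_pair] <;> intro h <;> simp [ih h]

instance : Countable ModalFormula := enc_inj.countable

section relPowLemmas
variable {W : Type*} {R : W → W → Prop}

theorem relPow_add {a b : ℕ} {x y z : W} (h1 : relPow R a x y) (h2 : relPow R b y z) :
    relPow R (a + b) x z := by
  induction b generalizing z with
  | zero => exact h2 ▸ h1
  | succ b ih => obtain ⟨u, hu, hR⟩ := h2; exact ⟨u, ih hu, hR⟩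

theorem relPow_to_path {n : ℕ} {x z : W} (h : relPow R n x z) :
    ∃ w : ℕ → W, w 0 = x ∧ w n = z ∧ ∀ j < n, R (w j) (w (j + 1)) := by
  induction n generalizing z with
  | zero => exact ⟨fun _ => x, rfl, h, by omega⟩
  | succ n ih =>
    obtain ⟨u, hu, hR⟩ := h
    obtain ⟨w, h0, hn, hstep⟩ := ih hu
    refine ⟨fun j => if j = n + 1 then z else w j, by simp [h0], by simp, ?_⟩
    intro j hj
    by_cases hj' : j = n
    · subst hj'; simpa [show j ≠ j + 1 by omega, hn] using hR
    · simp only [show j ≠ n + 1 by omega, show j + 1 ≠ n + 1 by omega, if_neg, ite_false]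
      exact hstep j (by omega)

theorem path_to_relPow {n : ℕ} {w : ℕ → W} (h : ∀ j < n, R (w j) (w (j + 1))) :
    ∀ j, j ≤ n → relPow R j (w 0) (w j) := by
  intro j hj
  induction j with
  | zero => rfl
  | succ j ih => exact ⟨w j, ih (by omega), h j (by omega)⟩

theorem relPow_map {A B : Type*} {RA : A → A → Prop} {RB : B → B → Prop} (f : A → B)
    (hf : ∀ x y, RA x y → RB (f x) (f y)) {k : ℕ} {x y : A} :
    relPow RA k x y → relPow RB k (f x) (f y) := by
  induction k generalizing y with
  | zero => intro h; exact congrArg f h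
  | succ k ih => rintro ⟨u, hu, hR⟩; exact ⟨f u, ih hu, hf _ _ hR⟩

end relPowLemmas

section Stage1

variable {W₀ : Type*} (Φ : Set (ℕ × ℕ)) (R₀ : W₀ → W₀ → Prop) (V₀ : ℕ → Set W₀)

/-- chosen diamond witness -/
noncomputable def dw (x : W₀) (ψ : ModalFormula) : W₀ :=
  if h : ∃ v, R₀ x v ∧ Sat R₀ V₀ v ψ then h.choose else x

theorem dw_spec {x : W₀} {ψ : ModalFormula} (h : ∃ v, R₀ x v ∧ Sat R₀ V₀ v ψ) :
    R₀ x (dw R₀ V₀ x ψ) ∧ Sat R₀ V₀ (dw R₀ V₀ x ψ) ψ := by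
  rw [dw, dif_pos h]; exact h.choose_spec

/-- chosen path witness -/
noncomputable def pw (n : ℕ) (x z : W₀) : ℕ → W₀ :=
  if h : ∃ w : ℕ → W₀, w 0 = x ∧ w n = z ∧ ∀ j < n, R₀ (w j) (w (j + 1)) then h.choose
  else fun _ => x

theorem pw_spec {n : ℕ} {x z : W₀} (h : relPow R₀ n x z) :
    (pw R₀ n x z) 0 = x ∧ (pw R₀ n x z) n = z ∧
      ∀ j < n, R₀ ((pw R₀ n x z) j) ((pw R₀ n x z) (j + 1)) := by
  have h' := relPow_to_path h
  rw [pw, dif_pos h']; exact h'.choose_spec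

variable (w₀ : W₀)

noncomputable def Sset : ℕ → Set W₀
  | 0 => {w₀}
  | i + 1 =>
      Sset i ∪ (⋃ x ∈ Sset i, Set.range (dw R₀ V₀ x)) ∪
        ⋃ mn ∈ Φ, ⋃ x ∈ Sset i, ⋃ z ∈ Sset i, Set.range (pw R₀ mn.2 x z)

theorem Sset_countable : ∀ i, (Sset Φ R₀ V₀ w₀ i).Countable := by
  intro i
  induction i with
  | zero => exact Set.countable_singleton _
  | succ i ih =>
      refine (ih.union (ih.biUnion fun x _ => Set.countable_range _)).union
        ((Set.to_countable Φ).biUnion fun mn _ => ih.biUnion fun x _ =>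
          ih.biUnion fun z _ => Set.countable_range _)

theorem Sset_mono {i j : ℕ} (h : i ≤ j) : Sset Φ R₀ V₀ w₀ i ⊆ Sset Φ R₀ V₀ w₀ j := by
  induction j with
  | zero => simpa [Nat.le_zero.mp h]
  | succ j ih =>
      rcases Nat.le_succ_iff.mp h with h' | h'
      · exact (ih h').trans (Set.subset_union_left.trans Set.subset_union_left)
      · simp [h']

noncomputable def Tset : Set W₀ := ⋃ i, Sset Φ R₀ V₀ w₀ i

theorem Tset_countable : (Tset Φ R₀ V₀ w₀).Countable :=
  Set.countable_iUnion (Sset_countable Φ R₀ V₀ w₀)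

theorem root_mem_Tset : w₀ ∈ Tset Φ R₀ V₀ w₀ :=
  Set.mem_iUnion.mpr ⟨0, rfl⟩

theorem dw_mem_Tset {x : W₀} (hx : x ∈ Tset Φ R₀ V₀ w₀) (ψ : ModalFormula) :
    dw R₀ V₀ x ψ ∈ Tset Φ R₀ V₀ w₀ := by
  obtain ⟨i, hi⟩ := Set.mem_iUnion.mp hx
  refine Set.mem_iUnion.mpr ⟨i + 1, Or.inl (Or.inr ?_)⟩
  exact Set.mem_biUnion hi ⟨ψ, rfl⟩

theorem pw_mem_Tset {mn : ℕ × ℕ} (hmn : mn ∈ Φ) {x z : W₀} (hx : x ∈ Tset Φ R₀ V₀ w₀)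
    (hz : z ∈ Tset Φ R₀ V₀ w₀) (j : ℕ) : pw R₀ mn.2 x z j ∈ Tset Φ R₀ V₀ w₀ := by
  obtain ⟨i, hi⟩ := Set.mem_iUnion.mp hx
  obtain ⟨i', hi'⟩ := Set.mem_iUnion.mp hz
  have hx' := Sset_mono Φ R₀ V₀ w₀ (le_max_left i i') hi
  have hz' := Sset_mono Φ R₀ V₀ w₀ (le_max_right i i') hi'
  refine Set.mem_iUnion.mpr ⟨max i i' + 1, Or.inr ?_⟩
  exact Set.mem_biUnion hmn (Set.mem_biUnion hx' (Set.mem_biUnion hz' ⟨j, rfl⟩))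

/-- the restricted model -/
def RT : Tset Φ R₀ V₀ w₀ → Tset Φ R₀ V₀ w₀ → Prop := fun a b => R₀ a b

def VT (p : ℕ) : Set (Tset Φ R₀ V₀ w₀) := {a | (a : W₀) ∈ V₀ p}

theorem sat_T (ψ : ModalFormula) (a : Tset Φ R₀ V₀ w₀) :
    Sat (RT Φ R₀ V₀ w₀) (VT Φ R₀ V₀ w₀) a ψ ↔ Sat R₀ V₀ (a : W₀) ψ := by
  induction ψ generalizing a with
  | bot => exact Iff.rfl
  | var p => exact Iff.rfl
  | neg ψ ih => exact not_congr (ih a)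
  | or ψ χ ih1 ih2 => exact or_congr (ih1 a) (ih2 a)
  | dia ψ ih =>
      constructor
      · rintro ⟨b, hb, hsat⟩; exact ⟨b, hb, (ih b).1 hsat⟩
      · rintro ⟨v, hv, hsat⟩
        have hex : ∃ v, R₀ (a : W₀) v ∧ Sat R₀ V₀ v ψ := ⟨v, hv, hsat⟩
        have hs := dw_spec R₀ V₀ hex
        exact ⟨⟨dw R₀ V₀ (a : W₀) ψ, dw_mem_Tset Φ R₀ V₀ w₀ a.2 ψ⟩, hs.1, (ih _).2 hs.2⟩

theorem phiFrame_T (hFrame : PhiFrame R₀ Φ) : PhiFrame (RT Φ R₀ V₀ w₀) Φ := by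
  rintro mn hmn a c hm
  have hm' : relPow R₀ mn.1 (a : W₀) (c : W₀) :=
    relPow_map (RA := RT Φ R₀ V₀ w₀) (RB := R₀) (fun x => (x : W₀)) (fun _ _ h => h) hm
  have hn : relPow R₀ mn.2 (a : W₀) (c : W₀) := hFrame mn hmn _ _ hm'
  obtain ⟨h0, hn', hstep⟩ := pw_spec R₀ hn
  set p := pw R₀ mn.2 (a : W₀) (c : W₀) with hp
  have hmem : ∀ j, p j ∈ Tset Φ R₀ V₀ w₀ := fun j => pw_mem_Tset Φ R₀ V₀ w₀ hmn a.2 c.2 j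
  set q : ℕ → Tset Φ R₀ V₀ w₀ := fun j => ⟨p j, hmem j⟩ with hq
  have hstep' : ∀ j < mn.2, RT Φ R₀ V₀ w₀ (q j) (q (j + 1)) := fun j hj => hstep j hj
  have := path_to_relPow hstep' mn.2 le_rfl
  have hq0 : q 0 = a := Subtype.ext h0
  have hqn : q mn.2 = c := Subtype.ext hn'
  rwa [hq0, hqn] at this

end Stage1

section Stage2

variable {W₁ : Type*} (R₁ : W₁ → W₁ → Prop) (V₁ : ℕ → Set W₁) (r₁ : W₁)

abbrev Lev : Type _ := {p : ℕ × W₁ // relPow R₁ p.1 r₁ p.2}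

def RL : Lev R₁ r₁ → Lev R₁ r₁ → Prop := fun a b => R₁ a.1.2 b.1.2 ∧ b.1.1 ≤ a.1.1 + 1

def VL (p : ℕ) : Set (Lev R₁ r₁) := {a | a.1.2 ∈ V₁ p}

def rL : Lev R₁ r₁ := ⟨(0, r₁), rfl⟩

theorem lev_le {j : ℕ} {a b : Lev R₁ r₁} (h : relPow (RL R₁ r₁) j a b) :
    b.1.1 ≤ a.1.1 + j := by
  induction j generalizing b with
  | zero => rw [show a = b from h]; omega
  | succ j ih => obtain ⟨u, hu, hR⟩ := h; have := ih hu; have := hR.2; omega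

theorem rootpath (a : Lev R₁ r₁) : relPow (RL R₁ r₁) a.1.1 (rL R₁ r₁) a := by
  obtain ⟨p, h0, hk, hstep⟩ := relPow_to_path a.2
  have hmem : ∀ j, j ≤ a.1.1 → relPow R₁ j r₁ (p j) := by
    intro j hj; have := path_to_relPow hstep j hj; rwa [h0] at this
  set q : ℕ → Lev R₁ r₁ := fun j =>
    if hj : j ≤ a.1.1 then ⟨(j, p j), hmem j hj⟩ else rL R₁ r₁ with hq
  have hstep' : ∀ j < a.1.1, RL R₁ r₁ (q j) (q (j + 1)) := by
    intro j hj
    simp only [hq, dif_pos (by omega : j ≤ a.1.1), dif_pos (by omega : j + 1 ≤ a.1.1)]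
    exact ⟨hstep j hj, Nat.le_refl _⟩
  have := path_to_relPow hstep' a.1.1 le_rfl
  have hq0 : q 0 = rL R₁ r₁ := by
    simp only [hq, dif_pos (Nat.zero_le _)]; exact Subtype.ext (by simp [h0, rL])
  have hqk : q a.1.1 = a := by
    simp only [hq, dif_pos le_rfl]
    exact Subtype.ext (by rw [Prod.ext_iff]; exact ⟨rfl, hk⟩)
  rwa [hq0, hqk] at this

theorem rooted_lev : Rooted (RL R₁ r₁) (rL R₁ r₁) := fun a => ⟨a.1.1, rootpath R₁ r₁ a⟩

theorem depth_lev (a : Lev R₁ r₁) : depth (RL R₁ r₁) (rL R₁ r₁) a = a.1.1 := by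
  refine le_antisymm (Nat.sInf_le (rootpath R₁ r₁ a)) (le_csInf ⟨a.1.1, rootpath R₁ r₁ a⟩ ?_)
  intro k hk
  have := lev_le R₁ r₁ hk
  simpa [rL] using this

theorem sat_lev (ψ : ModalFormula) (a : Lev R₁ r₁) :
    Sat (RL R₁ r₁) (VL R₁ V₁ r₁) a ψ ↔ Sat R₁ V₁ a.1.2 ψ := by
  induction ψ generalizing a with
  | bot => exact Iff.rfl
  | var p => exact Iff.rfl
  | neg ψ ih => exact not_congr (ih a)
  | or ψ χ ih1 ih2 => exact or_congr (ih1 a) (ih2 a)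
  | dia ψ ih =>
      constructor
      · rintro ⟨b, hb, hsat⟩; exact ⟨b.1.2, hb.1, (ih b).1 hsat⟩
      · rintro ⟨v, hv, hsat⟩
        refine ⟨⟨(a.1.1 + 1, v), ⟨a.1.2, a.2, hv⟩⟩, ⟨hv, le_rfl⟩, (ih _).2 hsat⟩

theorem cond1_lev (x y : Lev R₁ r₁) (h : RL R₁ r₁ x y) :
    ∃ y', RL R₁ r₁ x y' ∧
      depth (RL R₁ r₁) (rL R₁ r₁) y' = depth (RL R₁ r₁) (rL R₁ r₁) x + 1 ∧
      Bisim (RL R₁ r₁) (VL R₁ V₁ r₁) (RL R₁ r₁) (VL R₁ V₁ r₁) y' y := by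
  refine ⟨⟨(x.1.1 + 1, y.1.2), ⟨x.1.2, x.2, h.1⟩⟩, ⟨h.1, le_rfl⟩, ?_, ?_⟩
  · rw [depth_lev, depth_lev]
  · refine ⟨fun a b => a.1.2 = b.1.2, rfl, ?_⟩
    rintro w w' hww'
    refine ⟨fun p => by simp [VL, hww'], ?_, ?_⟩
    · rintro v ⟨hR, _⟩
      have hR' : R₁ w'.1.2 v.1.2 := by rw [← hww']; exact hR
      exact ⟨⟨(w'.1.1 + 1, v.1.2), ⟨w'.1.2, w'.2, hR'⟩⟩, ⟨hR', Nat.le_refl _⟩, rfl⟩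
    · rintro v' ⟨hR, _⟩
      have hR' : R₁ w.1.2 v'.1.2 := by rw [hww']; exact hR
      exact ⟨⟨(w.1.1 + 1, v'.1.2), ⟨w.1.2, w.2, hR'⟩⟩, ⟨hR', Nat.le_refl _⟩, rfl⟩

theorem cond2_lev (Φ : Set (ℕ × ℕ)) (hΦ : ∀ mn ∈ Φ, 1 < mn.1 ∧ mn.1 < mn.2)
    (hFrame : PhiFrame R₁ Φ) (mn : ℕ × ℕ) (hmn : mn ∈ Φ) (x z : Lev R₁ r₁)
    (h : relPow (RL R₁ r₁) mn.1 x z) :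
    DepthPath (RL R₁ r₁) (depth (RL R₁ r₁) (rL R₁ r₁)) mn.2 x z := by
  obtain ⟨hm1, hmlt⟩ := hΦ mn hmn
  have hm : relPow R₁ mn.1 x.1.2 z.1.2 :=
    relPow_map (RA := RL R₁ r₁) (RB := R₁) (fun a => a.1.2) (fun _ _ h => h.1) h
  have hzlev : z.1.1 ≤ x.1.1 + mn.1 := lev_le R₁ r₁ h
  have hn : relPow R₁ mn.2 x.1.2 z.1.2 := hFrame mn hmn _ _ hm
  obtain ⟨u, h0, hun, hstep⟩ := relPow_to_path hn
  have hmem : ∀ j, j ≤ mn.2 → relPow R₁ (x.1.1 + j) r₁ (u j) := by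
    intro j hj
    have := path_to_relPow hstep j hj
    rw [h0] at this
    exact relPow_add x.2 this
  set w : ℕ → Lev R₁ r₁ := fun j =>
    if hj : j < mn.2 then ⟨(x.1.1 + j, u j), hmem j hj.le⟩ else z with hw
  have hn0 : 0 < mn.2 := by omega
  refine ⟨w, ?_, ?_, ?_, ?_⟩
  · simp only [hw, dif_pos hn0]
    exact Subtype.ext (by simp [h0])
  · simp [hw]
  · intro j hj
    by_cases hj' : j + 1 < mn.2
    · simp only [hw, dif_pos hj, dif_pos hj']
      exact ⟨hstep j hj, show x.1.1 + (j + 1) ≤ x.1.1 + j + 1 by omega⟩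
    · have hj1 : j + 1 = mn.2 := by omega
      simp only [hw, dif_pos hj, dif_neg (by omega : ¬ j + 1 < mn.2)]
      refine ⟨?_, show z.1.1 ≤ x.1.1 + j + 1 by omega⟩
      have := hstep j hj
      rw [hj1, hun] at this
      exact this
  · intro j hj0 hjn
    simp only [hw, dif_pos hjn]
    rw [depth_lev, depth_lev]

end Stage2

section Transfer

variable {A : Type*} {B : Type*} (e : A ≃ B) (RA : A → A → Prop) (VA : ℕ → Set A) (rA : A)

def RB : B → B → Prop := fun b b' => RA (e.symm b) (e.symm b')

def VB (p : ℕ) : Set B := {b | e.symm b ∈ VA p}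

theorem RB_e {x y : A} : RB e RA (e x) (e y) ↔ RA x y := by simp [RB]

theorem relPow_transfer {k : ℕ} {b b' : B} :
    relPow (RB e RA) k b b' ↔ relPow RA k (e.symm b) (e.symm b') := by
  induction k generalizing b' with
  | zero => exact ⟨fun h => by rw [show b = b' from h]; rfl, fun h => e.symm.injective h⟩
  | succ k ih =>
      constructor
      · rintro ⟨u, hu, hR⟩; exact ⟨e.symm u, ih.1 hu, hR⟩
      · rintro ⟨u, hu, hR⟩
        refine ⟨e u, ih.2 (by simpa using hu), ?_⟩
        simpa [RB] using hR
  
theorem depth_transfer (b : B) :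
    depth (RB e RA) (e rA) b = depth RA rA (e.symm b) := by
  unfold depth
  congr 1
  ext k
  simp only [Set.mem_setOf_eq, relPow_transfer, Equiv.symm_apply_apply]

theorem sat_transfer (ψ : ModalFormula) (b : B) :
    Sat (RB e RA) (VB e VA) b ψ ↔ Sat RA VA (e.symm b) ψ := by
  induction ψ generalizing b with
  | bot => exact Iff.rfl
  | var p => exact Iff.rfl
  | neg ψ ih => exact not_congr (ih b)
  | or ψ χ ih1 ih2 => exact or_congr (ih1 b) (ih2 b)
  | dia ψ ih =>
      constructor
      · rintro ⟨v, hv, hsat⟩; exact ⟨e.symm v, hv, (ih v).1 hsat⟩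
      · rintro ⟨v, hv, hsat⟩
        refine ⟨e v, by simpa [RB] using hv, (ih (e v)).2 (by simpa using hsat)⟩

theorem bisim_transfer {x y : A}
    (h : Bisim RA VA RA VA x y) :
    Bisim (RB e RA) (VB e VA) (RB e RA) (VB e VA) (e x) (e y) := by
  obtain ⟨Z, hZ, hprop⟩ := h
  refine ⟨fun b b' => Z (e.symm b) (e.symm b'), by simpa using hZ, ?_⟩
  intro w w' hww'
  obtain ⟨hval, hfwd, hbwd⟩ := hprop _ _ hww'
  refine ⟨fun p => hval p, ?_, ?_⟩
  · intro v hv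
    obtain ⟨v', hv', hZ'⟩ := hfwd (e.symm v) hv
    exact ⟨e v', by simpa [RB] using hv', by simpa using hZ'⟩
  · intro v' hv'
    obtain ⟨v, hv, hZ'⟩ := hbwd (e.symm v') hv'
    exact ⟨e v, by simpa [RB] using hv, by simpa using hZ'⟩

theorem rooted_transfer (h : Rooted RA rA) : Rooted (RB e RA) (e rA) := by
  intro b
  obtain ⟨k, hk⟩ := h (e.symm b)
  exact ⟨k, (relPow_transfer e RA).2 (by simpa using hk)⟩

theorem depthPath_transfer {n : ℕ} {x z : A}
    (h : DepthPath RA (depth RA rA) n x z) :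
    DepthPath (RB e RA) (depth (RB e RA) (e rA)) n (e x) (e z) := by
  obtain ⟨w, h0, hn, hstep, hdep⟩ := h
  refine ⟨fun j => e (w j), by simp only []; rw [h0], by simp only []; rw [hn], ?_, ?_⟩
  · intro j hj; simpa [RB] using hstep j hj
  · intro j hj0 hjn
    rw [depth_transfer, depth_transfer]
    simpa using hdep j hj0 hjn

end Transfer

end RepAux

/-- Representation Lemma: a formula satisfiable in a `Φ`-frame is satisfied at the root of
a rooted model satisfying conditions (1) and (2). -/
theorem statement1 (Φ : Set (ℕ × ℕ)) (hΦ : ∀ mn ∈ Φ, 1 < mn.1 ∧ mn.1 < mn.2)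
    (φ : ModalFormula) {W₀ : Type*} (R₀ : W₀ → W₀ → Prop) (V₀ : ℕ → Set W₀) (w₀ : W₀)
    (hFrame : PhiFrame R₀ Φ) (hSat : Sat R₀ V₀ w₀ φ) :
    ∃ (W : Type) (R : W → W → Prop) (V : ℕ → Set W) (r : W),
      Rooted R r ∧ Sat R V r φ ∧
      (∀ x y, R x y → ∃ y', R x y' ∧ depth R r y' = depth R r x + 1 ∧ Bisim R V R V y' y) ∧
      (∀ mn ∈ Φ, ∀ x z, relPow R mn.1 x z → DepthPath R (depth R r) mn.2 x z) := by
  classical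
  have hSat1 : Sat (RepAux.RT Φ R₀ V₀ w₀) (RepAux.VT Φ R₀ V₀ w₀)
      ⟨w₀, RepAux.root_mem_Tset Φ R₀ V₀ w₀⟩ φ :=
    (RepAux.sat_T Φ R₀ V₀ w₀ φ _).2 hSat
  have hFrame1 : PhiFrame (RepAux.RT Φ R₀ V₀ w₀) Φ := RepAux.phiFrame_T Φ R₀ V₀ w₀ hFrame
  set R₁ := RepAux.RT Φ R₀ V₀ w₀ with hR₁
  set V₁ := RepAux.VT Φ R₀ V₀ w₀ with hV₁
  set r₁ : RepAux.Tset Φ R₀ V₀ w₀ := ⟨w₀, RepAux.root_mem_Tset Φ R₀ V₀ w₀⟩ with hr₁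
  haveI : Countable (RepAux.Tset Φ R₀ V₀ w₀) := (RepAux.Tset_countable Φ R₀ V₀ w₀).to_subtype
  haveI hA : Countable (RepAux.Lev R₁ r₁) :=
    show Countable {p : ℕ × (RepAux.Tset Φ R₀ V₀ w₀) // relPow R₁ p.1 r₁ p.2} from inferInstance
  obtain ⟨f, hf⟩ := exists_injective_nat (RepAux.Lev R₁ r₁)
  let e : RepAux.Lev R₁ r₁ ≃ ↥(Set.range f) := Equiv.ofInjective f hf
  refine ⟨↥(Set.range f), RepAux.RB e (RepAux.RL R₁ r₁), RepAux.VB e (RepAux.VL R₁ V₁ r₁),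
    e (RepAux.rL R₁ r₁), ?_, ?_, ?_, ?_⟩
  · exact RepAux.rooted_transfer e _ _ (RepAux.rooted_lev R₁ r₁)
  · have h1 : Sat (RepAux.RL R₁ r₁) (RepAux.VL R₁ V₁ r₁) (RepAux.rL R₁ r₁) φ :=
      (RepAux.sat_lev R₁ V₁ r₁ φ _).2 hSat1
    refine (RepAux.sat_transfer e _ _ φ _).2 ?_
    simpa using h1
  · intro x y hR
    obtain ⟨y', hR', hdep, hbis⟩ := RepAux.cond1_lev R₁ V₁ r₁ (e.symm x) (e.symm y) hR
    refine ⟨e y', by simpa [RepAux.RB] using hR', ?_, ?_⟩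
    · rw [RepAux.depth_transfer, RepAux.depth_transfer, Equiv.symm_apply_apply]
      exact hdep
    · have := RepAux.bisim_transfer e (RepAux.RL R₁ r₁) (RepAux.VL R₁ V₁ r₁) hbis
      simpa using this
  · intro mn hmn x z h
    have h' : relPow (RepAux.RL R₁ r₁) mn.1 (e.symm x) (e.symm z) :=
      (RepAux.relPow_transfer e _).1 h
    have hdp := RepAux.cond2_lev R₁ r₁ Φ hΦ hFrame1 mn hmn (e.symm x) (e.symm z) h'
    have := RepAux.depthPath_transfer e (RepAux.RL R₁ r₁) (RepAux.rL R₁ r₁) hdp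
    simpa using this
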